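/- Let V be a vector space over a field, W a subspace of V, and f ∈ L̄(V,W). Then f is unit-regular in L̄(V,W) if and only if the following three conditions hold: (i) the range of f↾W equals W ∩ R(f), i.e. f(W) = W ∩ R(f); (ii) the dimension of the kernel of f↾W equals the dimension of the quotient space W / f(W); (iii) there exists a subspace T of V such that T is a transversal of ker(f), W ∩ T is a transversal of ker(f↾W), and dim(V/(W + T)) = dim(V/(W + R(f))). -/

import Mathlib

open Submodule LinearMap Function


section Helpers

variable {K V : Type*} [Field K] [AddCommGroup V] [Module K V]

theorem exists_relCompl (p q : Submodule K V) (hpq : p ≤ q) :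
    ∃ r : Submodule K V, r ≤ q ∧ p ⊓ r = ⊥ ∧ p ⊔ r = q := by
  obtain ⟨r₀, hr₀⟩ := Submodule.exists_isCompl (comap q.subtype p)
  refine ⟨r₀.map q.subtype, map_subtype_le q r₀, ?_, ?_⟩
  · apply le_antisymm _ bot_le
    rintro x hx
    rw [Submodule.mem_inf] at hx
    obtain ⟨y, hy, rfl⟩ := hx.2
    have hm : y ∈ comap q.subtype p ⊓ r₀ := ⟨hx.1, hy⟩
    rw [disjoint_iff.1 hr₀.disjoint] at hm
    have hy0 : y = 0 := by simpa [Submodule.mem_bot] using hm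
    rw [hy0]
    simp only [map_zero]
    exact zero_mem ⊥
  · apply le_antisymm (sup_le hpq (map_subtype_le q r₀))
    intro x hx
    have hmem : (⟨x, hx⟩ : q) ∈ comap q.subtype p ⊔ r₀ := by
      rw [hr₀.sup_eq_top]; trivial
    obtain ⟨y, hy, z, hz, hyz⟩ := Submodule.mem_sup.1 hmem
    refine Submodule.mem_sup.2 ⟨↑y, hy, ↑z, ⟨z, hz, rfl⟩, ?_⟩
    simpa using congrArg (q.subtype) hyz

theorem isCompl_comap_of {p a w : Submodule K V} (hpw : p ≤ w) (haw : a ≤ w)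
    (hd : p ⊓ a = ⊥) (hs : p ⊔ a = w) :
    IsCompl (comap w.subtype p) (comap w.subtype a) := by
  constructor
  · rw [disjoint_iff]
    apply le_antisymm _ bot_le
    rintro x hx
    rw [Submodule.mem_inf] at hx
    have : (↑x : V) ∈ p ⊓ a := ⟨hx.1, hx.2⟩
    rw [hd] at this
    exact (Submodule.mem_bot _).2 (Subtype.ext ((Submodule.mem_bot _).1 this))
  · rw [codisjoint_iff, eq_top_iff]
    rintro x -
    have : (↑x : V) ∈ p ⊔ a := by rw [hs]; exact x.2
    obtain ⟨y, hy, z, hz, hyz⟩ := Submodule.mem_sup.1 this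
    exact Submodule.mem_sup.2 ⟨⟨y, hpw hy⟩, hy, ⟨z, haw hz⟩, hz, by ext; simpa using hyz⟩

theorem rank_quot_comap {p a w : Submodule K V} (hpw : p ≤ w) (haw : a ≤ w)
    (hd : p ⊓ a = ⊥) (hs : p ⊔ a = w) :
    Module.rank K (↥w ⧸ comap w.subtype p) = Module.rank K a :=
  ((quotientEquivOfIsCompl _ _ (isCompl_comap_of hpw haw hd hs)).trans
    (comapSubtypeEquivOfLe haw)).rank_eq

theorem quad_bijective {p q r s : Submodule K V}
    (h1 : p ⊓ q = ⊥) (h2 : (p ⊔ q) ⊓ r = ⊥) (h3 : (p ⊔ q ⊔ r) ⊓ s = ⊥)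
    (h4 : p ⊔ q ⊔ r ⊔ s = ⊤) :
    Function.Bijective (p.subtype.coprod (q.subtype.coprod (r.subtype.coprod s.subtype))) := by
  constructor
  · rw [← LinearMap.ker_eq_bot]
    apply le_antisymm _ bot_le
    rintro ⟨a, b, c, d⟩ habcd
    have hsum : (↑a : V) + (↑b + (↑c + ↑d)) = 0 := habcd
    rw [← add_assoc, ← add_assoc] at hsum
    have hdd : (↑d : V) = -((↑a : V) + ↑b + ↑c) := eq_neg_of_add_eq_zero_right hsum
    have hd0 : (↑d : V) ∈ (p ⊔ q ⊔ r) ⊓ s := by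
      refine ⟨?_, d.2⟩
      rw [hdd]
      exact neg_mem (add_mem (add_mem
        (Submodule.mem_sup_left (Submodule.mem_sup_left a.2))
        (Submodule.mem_sup_left (Submodule.mem_sup_right b.2)))
        (Submodule.mem_sup_right c.2))
    rw [h3] at hd0
    have hd' : (d : V) = 0 := by simpa using hd0
    rw [hd', add_zero] at hsum
    have hcc : (↑c : V) = -((↑a : V) + ↑b) := eq_neg_of_add_eq_zero_right hsum
    have hc0 : (↑c : V) ∈ (p ⊔ q) ⊓ r := by
      refine ⟨?_, c.2⟩
      rw [hcc]
      exact neg_mem (add_mem (Submodule.mem_sup_left a.2) (Submodule.mem_sup_right b.2))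
    rw [h2] at hc0
    have hc' : (c : V) = 0 := by simpa using hc0
    rw [hc', add_zero] at hsum
    have hbb : (↑b : V) = -(↑a : V) := eq_neg_of_add_eq_zero_right hsum
    have hb0 : (↑b : V) ∈ p ⊓ q := by
      refine ⟨?_, b.2⟩
      rw [hbb]; exact neg_mem a.2
    rw [h1] at hb0
    have hb' : (b : V) = 0 := by simpa using hb0
    rw [hb', add_zero] at hsum
    simp only [Submodule.mem_bot, Prod.mk_eq_zero]
    exact ⟨Subtype.ext hsum, Subtype.ext hb', Subtype.ext hc', Subtype.ext hd'⟩
  · rw [← LinearMap.range_eq_top, LinearMap.range_coprod, LinearMap.range_coprod,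
      LinearMap.range_coprod, Submodule.range_subtype, Submodule.range_subtype,
      Submodule.range_subtype, Submodule.range_subtype, ← h4]
    simp [sup_assoc]

theorem f_coe_restrict_symm {p q : Submodule K V} (f : V →ₗ[K] V)
    (h : ∀ x ∈ p, f x ∈ q) (hb : Function.Bijective (f.restrict h)) (a : ↥q) :
    f ↑((LinearEquiv.ofBijective (f.restrict h) hb).symm a) = ↑a := by
  conv_rhs => rw [← LinearEquiv.apply_symm_apply (LinearEquiv.ofBijective (f.restrict h) hb) a]
  rw [LinearEquiv.ofBijective_apply, LinearMap.restrict_coe_apply]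

end Helpers

/-- An element `s` of a monoid is unit-regular if `s * u * s = s` for some unit `u`. -/
def IsUnitRegular {M : Type*} [Monoid M] (s : M) : Prop :=
  ∃ u : Mˣ, s * (↑u : M) * s = s

/-- The monoid `L̄(V, W)` of all linear self-maps of `V` leaving the subspace `W` invariant. -/
def Lbar (K V : Type*) [Field K] [AddCommGroup V] [Module K V] (W : Submodule K V) :
    Submonoid (Module.End K V) where
  carrier := {f | ∀ w ∈ W, f w ∈ W}
  one_mem' := fun w hw => hw
  mul_mem' := fun {f g} hf hg w hw => hf _ (hg w hw)

/-- `T` is a transversal of the equivalence relation `ker f = {(x,y) : f x = f y}`: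
it contains exactly one element of each `ker f`-class. -/
def IsTransversal {X : Type*} (f : X → X) (T : Set X) : Prop :=
  ∀ x : X, ∃! t, t ∈ T ∧ f t = f x

/-- `T` is a transversal of the equivalence relation `ker (f↾Y)` on `Y`. -/
def IsTransversalOn {X : Type*} (f : X → X) (Y T : Set X) : Prop :=
  T ⊆ Y ∧ ∀ x ∈ Y, ∃! t, t ∈ T ∧ f t = f x

set_option maxHeartbeats 2000000 in
theorem stmt8 {K V : Type*} [Field K] [AddCommGroup V] [Module K V]
    (W : Submodule K V) (f : Module.End K V) (hf : ∀ w ∈ W, f w ∈ W) :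
    IsUnitRegular (⟨f, hf⟩ : Lbar K V W) ↔
      (f '' ↑W = (↑W : Set V) ∩ Set.range f ∧
       Module.rank K (LinearMap.ker (LinearMap.restrict f hf)) =
         Module.rank K (W ⧸ LinearMap.range (LinearMap.restrict f hf)) ∧
       ∃ T : Submodule K V, IsTransversal (f : V → V) ↑T ∧
         IsTransversalOn (f : V → V) ↑W ((↑W : Set V) ∩ ↑T) ∧
         Module.rank K (V ⧸ (W ⊔ T)) = Module.rank K (V ⧸ (W ⊔ LinearMap.range f))) := by
  constructor
  · rintro ⟨u, hu⟩
    set g : Module.End K V := ↑(↑u : ↥(Lbar K V W)) with hgdef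
    have hg : ∀ w ∈ W, g w ∈ W := (↑u : ↥(Lbar K V W)).2
    set g' : Module.End K V := ↑(↑u⁻¹ : ↥(Lbar K V W)) with hg'def
    have hg' : ∀ w ∈ W, g' w ∈ W := (↑u⁻¹ : ↥(Lbar K V W)).2
    have hgg' : ∀ x, g (g' x) = x := fun x =>
      LinearMap.congr_fun (congrArg Subtype.val u.mul_inv) x
    have hg'g : ∀ x, g' (g x) = x := fun x =>
      LinearMap.congr_fun (congrArg Subtype.val u.inv_mul) x
    have hfgf : ∀ x, f (g (f x)) = f x := fun x =>
      LinearMap.congr_fun (congrArg Subtype.val hu) x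
    refine ⟨?_, ?_, ?_⟩
    · apply Set.Subset.antisymm
      · rintro y ⟨x, hx, rfl⟩
        exact ⟨hf x hx, ⟨x, rfl⟩⟩
      · rintro y ⟨hyW, ⟨x, rfl⟩⟩
        exact ⟨g (f x), hg _ hyW, hfgf x⟩
    · set gbar : ↥W →ₗ[K] ↥W := g.restrict hg with hgbar
      set g'bar : ↥W →ₗ[K] ↥W := g'.restrict hg' with hg'bar
      have hseq1 : ∀ x : ↥W, gbar (g'bar x) = x := fun x =>
        Subtype.ext (by simp only [hgbar, hg'bar, LinearMap.restrict_apply]; exact hgg' x)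
      have hseq2 : ∀ x : ↥W, g'bar (gbar x) = x := fun x =>
        Subtype.ext (by simp only [hgbar, hg'bar, LinearMap.restrict_apply]; exact hg'g x)
      set ebar : ↥W ≃ₗ[K] ↥W :=
        LinearEquiv.ofLinear gbar g'bar (LinearMap.ext hseq1) (LinearMap.ext hseq2) with hebar
      set e : ↥W →ₗ[K] ↥W := gbar ∘ₗ (f.restrict hf) with hedef
      have hfe : ∀ x, (f.restrict hf) (e x) = (f.restrict hf) x := fun x =>
        Subtype.ext (by
          simp only [hedef, hgbar, LinearMap.comp_apply, LinearMap.restrict_apply]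
          exact hfgf x)
      have hee : ∀ x, e (e x) = e x := fun x => congrArg gbar (hfe x)
      set p := LinearMap.range e with hpdef
      set ecod := e.codRestrict p (fun x => LinearMap.mem_range_self e x) with hecod
      have hproj : ∀ x : p, ecod ↑x = x := by
        rintro ⟨x, y, rfl⟩
        exact Subtype.ext (by simpa [hecod, LinearMap.codRestrict_apply] using hee y)
      have hcompl : IsCompl p (LinearMap.ker ecod) := LinearMap.isCompl_of_proj hproj
      have hkere : LinearMap.ker ecod = LinearMap.ker e := LinearMap.ker_codRestrict p e _
      have hkerf : LinearMap.ker e = LinearMap.ker (f.restrict hf) := by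
        ext x
        simp only [LinearMap.mem_ker]
        constructor
        · intro hx
          have hx' : gbar ((f.restrict hf) x) = gbar 0 := by
            rw [map_zero]; exact hx
          exact ebar.injective hx'
        · intro hx
          show gbar _ = 0
          rw [hx, map_zero]
      have hrange : p = Submodule.map gbar (LinearMap.range (f.restrict hf)) :=
        LinearMap.range_comp _ _
      have hmapeq : Submodule.map (ebar : ↥W →ₗ[K] ↥W) (LinearMap.range (f.restrict hf)) = p := by
        rw [hrange]
        rfl
      calc Module.rank K (LinearMap.ker (f.restrict hf))
          = Module.rank K (LinearMap.ker ecod) := by rw [hkere, hkerf]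
        _ = Module.rank K (↥W ⧸ p) :=
            (Submodule.quotientEquivOfIsCompl p (LinearMap.ker ecod) hcompl).rank_eq.symm
        _ = Module.rank K (↥W ⧸ LinearMap.range (f.restrict hf)) :=
            (Submodule.Quotient.equiv (LinearMap.range (f.restrict hf)) p ebar hmapeq).rank_eq.symm
    · refine ⟨Submodule.map g (LinearMap.range f), ?_, ?_, ?_⟩
      · intro x
        refine ⟨g (f x), ⟨Submodule.mem_map_of_mem (LinearMap.mem_range_self f x), hfgf x⟩, ?_⟩
        rintro t ⟨htT, htf⟩
        obtain ⟨y, ⟨z, rfl⟩, rfl⟩ := htT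
        have hz : f z = f x := by rw [← hfgf z]; exact htf
        rw [hz]
      · refine ⟨Set.inter_subset_left, ?_⟩
        intro x hx
        refine ⟨g (f x), ⟨⟨hg _ (hf x hx),
          Submodule.mem_map_of_mem (LinearMap.mem_range_self f x)⟩, hfgf x⟩, ?_⟩
        rintro t ⟨⟨htW, htT⟩, htf⟩
        obtain ⟨y, ⟨z, rfl⟩, rfl⟩ := htT
        have hz : f z = f x := by rw [← hfgf z]; exact htf
        rw [hz]
      · set gE : V ≃ₗ[K] V :=
          LinearEquiv.ofLinear g g' (LinearMap.ext hgg') (LinearMap.ext hg'g) with hgE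
        have hmapW : Submodule.map (gE : V →ₗ[K] V) W = W := by
          apply le_antisymm
          · rintro _ ⟨w, hw, rfl⟩
            exact hg w hw
          · intro w hw
            exact ⟨g' w, hg' w hw, hgg' w⟩
        have hmapF : Submodule.map (gE : V →ₗ[K] V) (LinearMap.range f) = Submodule.map g (LinearMap.range f) :=
          rfl
        have hmap : Submodule.map (gE : V →ₗ[K] V) (W ⊔ LinearMap.range f) =
            W ⊔ Submodule.map g (LinearMap.range f) := by
          rw [Submodule.map_sup, hmapW, hmapF]
        exact (Submodule.Quotient.equiv _ _ gE hmap).rank_eq.symm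
  · rintro ⟨hi, hii, T, hT, ⟨-, htw⟩, hrank⟩
    -- Reverse direction
    set F := LinearMap.range f with hFdef
    set FW := Submodule.map f W with hFWdef
    have hFW_le_W : FW ≤ W := by rintro _ ⟨x, hx, rfl⟩; exact hf x hx
    have hFW_le_F : FW ≤ F := by rintro _ ⟨x, hx, rfl⟩; exact ⟨x, rfl⟩
    have hFW : FW = W ⊓ F := SetLike.coe_injective (by
      rw [hFWdef, hFdef, Submodule.map_coe, Submodule.coe_inf, LinearMap.coe_range]
      exact hi)
    have hKT : LinearMap.ker f ⊓ T = ⊥ := by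
      apply le_antisymm _ bot_le
      intro x hx
      rw [Submodule.mem_inf] at hx
      obtain ⟨t, _, huni⟩ := hT x
      have h1 : x = t := huni x ⟨hx.2, rfl⟩
      have h2 : (0 : V) = t := huni 0 ⟨T.zero_mem, by
        rw [map_zero, LinearMap.mem_ker.1 hx.1]⟩
      rw [Submodule.mem_bot, h1, ← h2]
    set TW := W ⊓ T with hTWdef
    set Kw := LinearMap.ker f ⊓ W with hKwdef
    have hTW_le_W : TW ≤ W := inf_le_left
    have hTW_le_T : TW ≤ T := inf_le_right
    have hKw_le_W : Kw ≤ W := inf_le_right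
    have hTWKw : TW ⊔ Kw = W := by
      apply le_antisymm (sup_le hTW_le_W hKw_le_W)
      intro x hx
      obtain ⟨t, ⟨htWT, htf⟩, -⟩ := htw x hx
      refine Submodule.mem_sup.2 ⟨t, Submodule.mem_inf.2 ⟨htWT.1, htWT.2⟩, x - t,
        Submodule.mem_inf.2 ⟨?_, W.sub_mem hx htWT.1⟩, by abel⟩
      rw [LinearMap.mem_ker, map_sub, htf, sub_self]
    have hfT : Submodule.map f T = F := by
      apply le_antisymm (Submodule.map_le_iff_le_comap.2 (fun x _ => Submodule.mem_comap.2 (LinearMap.mem_range_self f x)))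
      rintro _ ⟨x, rfl⟩
      obtain ⟨t, ⟨htT, htf⟩, -⟩ := hT x
      exact ⟨t, htT, htf⟩
    have hfTW : Submodule.map f TW = FW := by
      apply le_antisymm (Submodule.map_mono hTW_le_W)
      rintro _ ⟨x, hx, rfl⟩
      obtain ⟨t, ⟨htWT, htf⟩, -⟩ := htw x hx
      exact ⟨t, Submodule.mem_inf.2 ⟨htWT.1, htWT.2⟩, htf⟩
    -- σ1 : FW ≃ TW inverse of f
    have h1mem : ∀ x ∈ TW, f x ∈ FW := fun x hx => ⟨x, (Submodule.mem_inf.1 hx).1, rfl⟩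
    have hb1 : Function.Bijective (f.restrict h1mem) := by
      constructor
      · intro x y hxy
        have h' : f ↑x = f ↑y := by
          rw [← LinearMap.restrict_coe_apply f h1mem x, ← LinearMap.restrict_coe_apply f h1mem y,
            hxy]
        have hsub : (↑x - ↑y : V) ∈ LinearMap.ker f ⊓ T :=
          Submodule.mem_inf.2 ⟨by rw [LinearMap.mem_ker, map_sub, h', sub_self],
            T.sub_mem (hTW_le_T x.2) (hTW_le_T y.2)⟩
        rw [hKT, Submodule.mem_bot, sub_eq_zero] at hsub
        exact Subtype.ext hsub
      · rintro ⟨y, hy⟩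
        rw [← hfTW] at hy
        obtain ⟨x, hx, hxy⟩ := hy
        exact ⟨⟨x, hx⟩, Subtype.ext (by rw [LinearMap.restrict_coe_apply]; exact hxy)⟩
    set σ1 : ↥FW ≃ₗ[K] ↥TW := (LinearEquiv.ofBijective (f.restrict h1mem) hb1).symm with hσ1def
    have hσ1 : ∀ a : ↥FW, f ↑(σ1 a) = ↑a := fun a => f_coe_restrict_symm f h1mem hb1 a
    have hσ1TW : ∀ a : ↥FW, (↑(σ1 a) : V) ∈ TW := fun a => (σ1 a).2
    -- ψ : F ≃ T inverse of f
    have hTmem : ∀ x ∈ T, f x ∈ F := fun x _ => ⟨x, rfl⟩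
    have hbT : Function.Bijective (f.restrict hTmem) := by
      constructor
      · intro x y hxy
        have h' : f ↑x = f ↑y := by
          rw [← LinearMap.restrict_coe_apply f hTmem x, ← LinearMap.restrict_coe_apply f hTmem y,
            hxy]
        have hsub : (↑x - ↑y : V) ∈ LinearMap.ker f ⊓ T :=
          Submodule.mem_inf.2 ⟨by rw [LinearMap.mem_ker, map_sub, h', sub_self],
            T.sub_mem x.2 y.2⟩
        rw [hKT, Submodule.mem_bot, sub_eq_zero] at hsub
        exact Subtype.ext hsub
      · rintro ⟨y, hy⟩
        rw [← hfT] at hy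
        obtain ⟨x, hx, hxy⟩ := hy
        exact ⟨⟨x, hx⟩, Subtype.ext (by rw [LinearMap.restrict_coe_apply]; exact hxy)⟩
    set ψ : ↥F ≃ₗ[K] ↥T := (LinearEquiv.ofBijective (f.restrict hTmem) hbT).symm with hψdef
    have hψ : ∀ y : ↥F, f ↑(ψ y) = ↑y := fun y => f_coe_restrict_symm f hTmem hbT y
    have hψFW : ∀ y : ↥F, (↑y : V) ∈ FW → (↑(ψ y) : V) ∈ TW := by
      intro y hy
      obtain ⟨w, hw, hwy⟩ := hy
      obtain ⟨s, hs, huni⟩ := hT w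
      obtain ⟨t, ⟨htWT, htf⟩, -⟩ := htw w hw
      have h1 : (↑(ψ y) : V) = s := huni _ ⟨(ψ y).2, by rw [hψ y, ← hwy]⟩
      have h2 : t = s := huni t ⟨htWT.2, htf⟩
      rw [h1, ← h2]
      exact Submodule.mem_inf.2 ⟨htWT.1, htWT.2⟩
    -- complements
    obtain ⟨A, hA_le, hAd, hAs⟩ := exists_relCompl FW W hFW_le_W
    obtain ⟨B, hB_le, hBd, hBs⟩ := exists_relCompl FW F hFW_le_F
    obtain ⟨C, hC⟩ := Submodule.exists_isCompl (W ⊔ F)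
    obtain ⟨C', hC'⟩ := Submodule.exists_isCompl (W ⊔ T)
    -- B' and σ3
    set j : ↥B →ₗ[K] V := T.subtype ∘ₗ (ψ.toLinearMap ∘ₗ Submodule.inclusion hB_le) with hjdef
    have hj_T : ∀ c : ↥B, j c ∈ T := fun c => (ψ (Submodule.inclusion hB_le c)).2
    have hj_f : ∀ c : ↥B, f (j c) = ↑c := fun c => by
      have h0 : j c = ↑(ψ (Submodule.inclusion hB_le c)) := rfl
      rw [h0, hψ, Submodule.coe_inclusion]
    have hj_inj : Function.Injective j := fun x y h =>
      Subtype.ext (by rw [← hj_f x, ← hj_f y, h])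
    set B' := LinearMap.range j with hB'def
    have hB'_le_T : B' ≤ T := by rintro _ ⟨c, rfl⟩; exact hj_T c
    set σ3 : ↥B ≃ₗ[K] ↥B' := LinearEquiv.ofInjective j hj_inj with hσ3def
    have hσ3 : ∀ c : ↥B, f ↑(σ3 c) = ↑c := fun c => by
      have h0 : (↑(σ3 c) : V) = j c := by rw [hσ3def]; exact LinearEquiv.ofInjective_apply j c
      rw [h0, hj_f]
    -- disjointness and sup facts
    have hWB : W ⊓ B = ⊥ := by
      apply le_antisymm _ bot_le
      intro x hx
      rw [Submodule.mem_inf] at hx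
      have hxFW : x ∈ FW := by rw [hFW]; exact Submodule.mem_inf.2 ⟨hx.1, hB_le hx.2⟩
      have : x ∈ FW ⊓ B := Submodule.mem_inf.2 ⟨hxFW, hx.2⟩
      rw [hBd] at this
      exact this
    have hTWB' : TW ⊓ B' = ⊥ := by
      apply le_antisymm _ bot_le
      intro x hx
      rw [Submodule.mem_inf] at hx
      obtain ⟨c, rfl⟩ := hx.2
      have h1 : f (j c) ∈ FW := by rw [← hfTW]; exact ⟨j c, hx.1, rfl⟩
      rw [hj_f c] at h1
      have h2 : (↑c : V) ∈ FW ⊓ B := Submodule.mem_inf.2 ⟨h1, c.2⟩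
      rw [hBd, Submodule.mem_bot] at h2
      have hc0 : c = 0 := Subtype.ext h2
      rw [hc0, map_zero]
      exact zero_mem ⊥
    have hWB' : W ⊓ B' = ⊥ := by
      apply le_antisymm _ bot_le
      intro x hx
      rw [Submodule.mem_inf] at hx
      have : x ∈ TW ⊓ B' :=
        Submodule.mem_inf.2 ⟨Submodule.mem_inf.2 ⟨hx.1, hB'_le_T hx.2⟩, hx.2⟩
      rw [hTWB'] at this
      exact this
    have hWBF : W ⊔ B = W ⊔ F := by
      apply le_antisymm (sup_le le_sup_left (hB_le.trans le_sup_right))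
      apply sup_le le_sup_left
      rw [← hBs]
      exact sup_le (hFW_le_W.trans le_sup_left) le_sup_right
    have hWB'T : W ⊔ B' = W ⊔ T := by
      apply le_antisymm (sup_le le_sup_left (hB'_le_T.trans le_sup_right))
      apply sup_le le_sup_left
      intro t ht
      have hft : f t ∈ F := ⟨t, rfl⟩
      have hft2 : f t ∈ FW ⊔ B := by rw [hBs]; exact hft
      obtain ⟨y, hy, z, hz, hyz⟩ := Submodule.mem_sup.1 hft2
      have hyF : y ∈ F := hFW_le_F hy
      have hzF : z ∈ F := hB_le hz
      have hteq : t = ↑(ψ ⟨f t, hft⟩) := by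
        obtain ⟨s, hs, huni⟩ := hT t
        have e1 : t = s := huni t ⟨ht, rfl⟩
        have e2 : (↑(ψ ⟨f t, hft⟩) : V) = s := huni _ ⟨(ψ ⟨f t, hft⟩).2, hψ ⟨f t, hft⟩⟩
        exact e1.trans e2.symm
      have hsplit : (⟨f t, hft⟩ : ↥F) = ⟨y, hyF⟩ + ⟨z, hzF⟩ := Subtype.ext (by
        simp only [Submodule.coe_add]
        exact hyz.symm)
      have hdec : t = ↑(ψ ⟨y, hyF⟩) + ↑(ψ ⟨z, hzF⟩) := by
        rw [hteq, hsplit, map_add, Submodule.coe_add]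
      rw [hdec]
      refine Submodule.add_mem _ (Submodule.mem_sup_left (hTW_le_W (hψFW ⟨y, hyF⟩ hy))) ?_
      refine Submodule.mem_sup_right ?_
      refine ⟨⟨z, hz⟩, ?_⟩
      have : Submodule.inclusion hB_le (⟨z, hz⟩ : ↥B) = ⟨z, hzF⟩ :=
        Subtype.ext (Submodule.coe_inclusion _ _)
      show (↑(ψ (Submodule.inclusion hB_le ⟨z, hz⟩)) : V) = _
      rw [this]
    -- σ2 : A ≃ Kw via ranks
    have hrangebar : LinearMap.range (f.restrict hf) = Submodule.comap W.subtype FW := by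
      ext x
      constructor
      · rintro ⟨y, rfl⟩
        exact ⟨↑y, y.2, (LinearMap.restrict_coe_apply f hf y).symm⟩
      · rintro ⟨w, hw, hwx⟩
        exact ⟨⟨w, hw⟩, Subtype.ext (by rw [LinearMap.restrict_coe_apply]; exact hwx)⟩
    have hkerbar : LinearMap.ker (f.restrict hf) = Submodule.comap W.subtype Kw := by
      ext x
      constructor
      · intro hx
        have h0 : f ↑x = 0 := by
          rw [← LinearMap.restrict_coe_apply f hf x, LinearMap.mem_ker.1 hx,
            ZeroMemClass.coe_zero]
        exact Submodule.mem_inf.2 ⟨LinearMap.mem_ker.2 h0, x.2⟩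
      · intro hx
        have h0 : f ↑x = 0 := LinearMap.mem_ker.1 (Submodule.mem_inf.1 hx).1
        exact LinearMap.mem_ker.2 (Subtype.ext (by rw [LinearMap.restrict_coe_apply]; exact h0))
    have hrankA : Module.rank K ↥A = Module.rank K ↥Kw := by
      calc Module.rank K ↥A
          = Module.rank K (↥W ⧸ LinearMap.range (f.restrict hf)) := by
            rw [hrangebar]
            exact (rank_quot_comap hFW_le_W hA_le hAd hAs).symm
        _ = Module.rank K ↥(LinearMap.ker (f.restrict hf)) := hii.symm
        _ = Module.rank K ↥Kw := by
            rw [hkerbar]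
            exact (Submodule.comapSubtypeEquivOfLe hKw_le_W).rank_eq
    set σ2 : ↥A ≃ₗ[K] ↥Kw := LinearEquiv.ofRankEq _ _ hrankA with hσ2def
    -- σ4 : C ≃ C' via ranks
    have hrankC : Module.rank K ↥C = Module.rank K ↥C' := by
      calc Module.rank K ↥C
          = Module.rank K (V ⧸ (W ⊔ F)) :=
            (Submodule.quotientEquivOfIsCompl _ _ hC).rank_eq.symm
        _ = Module.rank K (V ⧸ (W ⊔ T)) := hrank.symm
        _ = Module.rank K ↥C' := (Submodule.quotientEquivOfIsCompl _ _ hC').rank_eq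
    set σ4 : ↥C ≃ₗ[K] ↥C' := LinearEquiv.ofRankEq _ _ hrankC with hσ4def
    -- assemble the equivalence
    have hq2 : (FW ⊔ A) ⊓ B = ⊥ := by rw [hAs]; exact hWB
    have hq3 : (FW ⊔ A ⊔ B) ⊓ C = ⊥ := by rw [hAs, hWBF]; exact disjoint_iff.1 hC.disjoint
    have hq4 : FW ⊔ A ⊔ B ⊔ C = ⊤ := by rw [hAs, hWBF]; exact hC.sup_eq_top
    have ht1 : TW ⊓ Kw = ⊥ := by
      apply le_antisymm _ bot_le
      intro x hx
      rw [Submodule.mem_inf] at hx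
      have : x ∈ LinearMap.ker f ⊓ T :=
        Submodule.mem_inf.2 ⟨(Submodule.mem_inf.1 hx.2).1, (Submodule.mem_inf.1 hx.1).2⟩
      rw [hKT] at this
      exact this
    have ht2 : (TW ⊔ Kw) ⊓ B' = ⊥ := by rw [hTWKw]; exact hWB'
    have ht3 : (TW ⊔ Kw ⊔ B') ⊓ C' = ⊥ := by rw [hTWKw, hWB'T]; exact disjoint_iff.1 hC'.disjoint
    have ht4 : TW ⊔ Kw ⊔ B' ⊔ C' = ⊤ := by rw [hTWKw, hWB'T]; exact hC'.sup_eq_top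
    set ΦE : (↥FW × ↥A × ↥B × ↥C) ≃ₗ[K] V :=
      LinearEquiv.ofBijective (FW.subtype.coprod (A.subtype.coprod (B.subtype.coprod C.subtype)))
        (quad_bijective hAd hq2 hq3 hq4) with hΦE
    set ΨE : (↥TW × ↥Kw × ↥B' × ↥C') ≃ₗ[K] V :=
      LinearEquiv.ofBijective (TW.subtype.coprod (Kw.subtype.coprod (B'.subtype.coprod C'.subtype)))
        (quad_bijective ht1 ht2 ht3 ht4) with hΨE
    set uE : V ≃ₗ[K] V :=
      (ΦE.symm.trans (σ1.prodCongr (σ2.prodCongr (σ3.prodCongr σ4)))).trans ΨE with huE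
    have hkey : ∀ (a : ↥FW) (b : ↥A) (c : ↥B) (d : ↥C),
        uE (↑a + (↑b + (↑c + ↑d))) = ↑(σ1 a) + (↑(σ2 b) + (↑(σ3 c) + ↑(σ4 d))) := by
      intro a b c d
      have h1 : (↑a + (↑b + (↑c + ↑d)) : V) = ΦE (a, b, c, d) := rfl
      rw [huE, h1]
      simp only [LinearEquiv.trans_apply, LinearEquiv.symm_apply_apply]
      rfl
    have hmemW : ∀ x ∈ W, uE x ∈ W := by
      intro x hx
      rw [← hAs] at hx
      obtain ⟨y, hy, z, hz, hyz⟩ := Submodule.mem_sup.1 hx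
      have hx' : x = ↑(⟨y, hy⟩ : ↥FW) + (↑(⟨z, hz⟩ : ↥A) + (↑(0 : ↥B) + ↑(0 : ↥C))) := by
        simp [← hyz]
      rw [hx', hkey]
      simp only [map_zero, ZeroMemClass.coe_zero, add_zero]
      exact W.add_mem (hTW_le_W (σ1 _).2) (hKw_le_W (σ2 _).2)
    have hmemW' : ∀ x ∈ W, uE.symm x ∈ W := by
      intro x hx
      rw [← hTWKw] at hx
      obtain ⟨y, hy, z, hz, hyz⟩ := Submodule.mem_sup.1 hx
      have hx' : uE (↑(σ1.symm ⟨y, hy⟩) + (↑(σ2.symm ⟨z, hz⟩) + (↑(0 : ↥B) + ↑(0 : ↥C)))) = x := by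
        rw [hkey]
        simp only [LinearEquiv.apply_symm_apply, map_zero, ZeroMemClass.coe_zero, add_zero]
        exact hyz
      rw [← hx', LinearEquiv.symm_apply_apply]
      refine W.add_mem (hFW_le_W (σ1.symm _).2) (W.add_mem (hA_le (σ2.symm _).2) ?_)
      simp only [ZeroMemClass.coe_zero, add_zero]
      exact W.zero_mem
    refine ⟨⟨⟨uE.toLinearMap, hmemW⟩, ⟨uE.symm.toLinearMap, hmemW'⟩, ?_, ?_⟩, ?_⟩
    · exact Subtype.ext (LinearMap.ext fun x => uE.apply_symm_apply x)
    · exact Subtype.ext (LinearMap.ext fun x => uE.symm_apply_apply x)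
    · apply Subtype.ext
      apply LinearMap.ext
      intro x
      show f (uE (f x)) = f x
      have hfx : f x ∈ FW ⊔ B := by rw [hBs]; exact ⟨x, rfl⟩
      obtain ⟨y, hy, z, hz, hyz⟩ := Submodule.mem_sup.1 hfx
      have h1 : f x = ↑(⟨y, hy⟩ : ↥FW) + (↑(0 : ↥A) + (↑(⟨z, hz⟩ : ↥B) + ↑(0 : ↥C))) := by
        simp [← hyz]
      rw [h1, hkey]
      simp only [map_zero, ZeroMemClass.coe_zero, zero_add, add_zero, map_add]
      rw [hσ1, hσ3]
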